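/- With 𝓐 and G_𝓐 as above, the identity labeling ℓ_𝓐(i) = i on G_𝓐 is a weak harmonic labeling: for every non-leaf vertex i of G_𝓐, deg(i)·i = Σ_{j ∼ i} j. -/

import Mathlib

/-- `a` is the (integer) average of the finite set `A ⊆ ℤ` and belongs to `A`;
i.e. `A` is a harmonic subset with `av(A) = a`. -/
def avOf (A : Finset ℤ) (a : ℤ) : Prop :=
  a ∈ A ∧ (A.card : ℤ) * a = ∑ k ∈ A, k

/-- The graph `G_𝓐` associated to a collection `𝓐` of harmonic subsets of `ℤ`. -/
def Hgraph (𝓐 : Set (Finset ℤ)) : SimpleGraph {x : ℤ // ∃ A ∈ 𝓐, x ∈ A} :=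
  SimpleGraph.fromRel (fun i j => ∃ A ∈ 𝓐, ∃ a : ℤ, avOf A a ∧ a = i.1 ∧ j.1 ∈ A)


lemma avOf_unique {A : Finset ℤ} {x y : ℤ} (hx : avOf A x) (hy : avOf A y) : x = y := by
  have hc : (A.card : ℤ) ≠ 0 := by
    have h0 : 0 < A.card := Finset.card_pos.mpr ⟨x, hx.1⟩
    exact_mod_cast h0.ne'
  exact mul_left_cancel₀ hc (hx.2.trans hy.2.symm)

/-- For a collection `𝓐` of non-trivial harmonic subsets of `ℤ` satisfying (P1)–(P5),
the identity labeling of `G_𝓐` is a weak harmonic labeling: for every non-leaf vertex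
`i`, `deg(i)·i = Σ_{j ∼ i} j`. -/
theorem Hgraph_identity_weak_harmonic (𝓐 : Set (Finset ℤ))
    (hA : ∀ A ∈ 𝓐, 2 ≤ A.card ∧ ∃ a : ℤ, avOf A a)
    (hP1 : ({x : ℤ | ∃ A ∈ 𝓐, x ∈ A}).OrdConnected)
    (hP2 : ∀ A ∈ 𝓐, ∀ B ∈ 𝓐, ∀ a : ℤ, avOf A a → avOf B a → A = B)
    (hP3 : ∀ A ∈ 𝓐, ∀ B ∈ 𝓐, A ≠ B → ∀ t : ℤ, t ∈ A → t ∈ B → ∃ C ∈ 𝓐, avOf C t)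
    (hP4 : ∀ A ∈ 𝓐, ∀ B ∈ 𝓐, ∀ a : ℤ, avOf A a → a ∈ B → ∃ b : ℤ, avOf B b ∧ b ∈ A)
    (hP5 : ∀ A ∈ 𝓐, ∀ B ∈ 𝓐,
      Relation.ReflTransGen (fun X Y => X ∈ 𝓐 ∧ Y ∈ 𝓐 ∧ ∃ a : ℤ, avOf X a ∧ a ∈ Y) A B) :
    ∀ i : {x : ℤ // ∃ A ∈ 𝓐, x ∈ A}, (¬ ∃! j, (Hgraph 𝓐).Adj i j) →
      (((Hgraph 𝓐).neighborSet i).ncard : ℤ) * i.1 =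
        ∑ᶠ j ∈ (Hgraph 𝓐).neighborSet i, (j : {x : ℤ // ∃ A ∈ 𝓐, x ∈ A}).1 := by

  intro i hleaf
  -- Step 1: `i` is the average of some set in `𝓐`.
  have havex : ∃ A ∈ 𝓐, avOf A i.1 := by
    by_contra hno
    push_neg at hno
    obtain ⟨A₀, hA₀, hiA₀⟩ := i.2
    obtain ⟨hcard, a, ha⟩ := hA A₀ hA₀
    have hane : a ≠ i.1 := fun h => hno A₀ hA₀ (h ▸ ha)
    refine hleaf ⟨⟨a, A₀, hA₀, ha.1⟩, ?_, ?_⟩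
    · simp only [Hgraph, SimpleGraph.fromRel_adj]
      exact ⟨fun h => hane (congrArg Subtype.val h).symm,
        Or.inr ⟨A₀, hA₀, a, ha, rfl, hiA₀⟩⟩
    · rintro j hj
      simp only [Hgraph, SimpleGraph.fromRel_adj] at hj
      obtain ⟨hne, hor | hor⟩ := hj
      · obtain ⟨B, hB, b, hb, hbi, _⟩ := hor
        exact absurd (hbi ▸ hb) (hno B hB)
      · obtain ⟨B, hB, b, hb, hbj, hiB⟩ := hor
        by_cases hBA : B = A₀
        · subst hBA
          exact Subtype.ext (hbj ▸ (avOf_unique hb ha))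
        · obtain ⟨C, hC, hC'⟩ := hP3 A₀ hA₀ B hB (Ne.symm hBA) i.1 hiA₀ hiB
          exact absurd hC' (hno C hC)
  obtain ⟨A, hAm, hav⟩ := havex
  -- The neighbor set of `i` is `A.erase i.1`, viewed inside the subtype.
  let emb : {k // k ∈ A.erase i.1} ↪ {x : ℤ // ∃ A ∈ 𝓐, x ∈ A} :=
    ⟨fun k => ⟨k.1, A, hAm, Finset.mem_of_mem_erase k.2⟩,
      fun a b h => Subtype.ext (congrArg (fun x : {x : ℤ // ∃ A ∈ 𝓐, x ∈ A} => x.1) h)⟩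
  let T : Finset {x : ℤ // ∃ A ∈ 𝓐, x ∈ A} := (A.erase i.1).attach.map emb
  have hmemT : ∀ j, j ∈ T ↔ j.1 ∈ A.erase i.1 := by
    intro j
    constructor
    · intro hj
      obtain ⟨k, -, hk⟩ := Finset.mem_map.mp hj
      have : k.1 = j.1 := congrArg Subtype.val hk
      exact this ▸ k.2
    · intro hj
      exact Finset.mem_map.mpr ⟨⟨j.1, hj⟩, Finset.mem_attach _ _, Subtype.ext rfl⟩
  have hS : (Hgraph 𝓐).neighborSet i = ↑T := by
    ext j
    rw [SimpleGraph.mem_neighborSet, Finset.mem_coe, hmemT, Finset.mem_erase]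
    simp only [Hgraph, SimpleGraph.fromRel_adj]
    constructor
    · rintro ⟨hne, hor | hor⟩
      · obtain ⟨B, hB, b, hb, hbi, hjB⟩ := hor
        have hBA : B = A := hP2 B hB A hAm i.1 (hbi ▸ hb) hav
        exact ⟨fun h => hne (Subtype.ext h.symm), hBA ▸ hjB⟩
      · obtain ⟨B, hB, b, hb, hbj, hiB⟩ := hor
        obtain ⟨c, hc, hcA⟩ := hP4 A hAm B hB i.1 hav hiB
        have : c = j.1 := hbj ▸ avOf_unique hc hb
        exact ⟨fun h => hne (Subtype.ext h.symm), this ▸ hcA⟩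
    · rintro ⟨hne, hjA⟩
      exact ⟨fun h => hne (congrArg Subtype.val h).symm,
        Or.inl ⟨A, hAm, i.1, hav, rfl, hjA⟩⟩
  have hTcard : T.card = A.card - 1 := by
    simp [T, Finset.card_erase_of_mem hav.1]
  have hTsum : (∑ j ∈ T, j.1) = (∑ k ∈ A, k) - i.1 := by
    rw [show (∑ j ∈ T, j.1) = ∑ k ∈ (A.erase i.1).attach, k.1 from Finset.sum_map _ _ _,
      Finset.sum_attach (A.erase i.1) (fun k => k),
      Finset.sum_erase_eq_sub hav.1]
  rw [hS, Set.ncard_coe_finset, finsum_mem_coe_finset, hTsum, hTcard]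
  have h1 : 1 ≤ A.card := Finset.card_pos.mp (Finset.card_pos.mpr ⟨i.1, hav.1⟩) |> fun _ => Finset.one_le_card.mpr ⟨i.1, hav.1⟩
  have hc := hav.2
  push_cast [h1]
  linarith
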